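/- Let θ ≥ 0 with Φ(θ) < ∞. Then for every t ≥ 0, E[∑_{u∈I_t} e^{−θ S(u)}] = e^{tΦ(θ)}. -/

import Mathlib

open MeasureTheory ProbabilityTheory Filter
open scoped ENNReal Topology

noncomputable section

variable {Ω : Type*} [MeasurableSpace Ω]

/-- The characteristic function of a measure `μ` on `ℝ`. -/
def charFn (μ : Measure ℝ) (ξ : ℝ) : ℂ := ∫ x, Complex.exp (Complex.I * (ξ * x)) ∂μ

/-- The smoothing transform on the level of characteristic functions:
`Q̂(φ)(ξ) = E[∏_{j=1}^N φ(A_j ξ)]`.  Since `φ(0) = 1` for a characteristic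
function `φ`, the (finite) product over `j = 1, …, N` coincides with the product
over those `j` with `A_j ≠ 0`. -/
def Qhat (A : ℕ → Ω → ℝ) (P : Measure Ω) (φ : ℝ → ℂ) (ξ : ℝ) : ℂ :=
  ∫ ω, ∏ᶠ (j : ℕ) (_ : A j ω ≠ 0), φ (A j ω * ξ) ∂P

/-- `(μ_t)_{t ≥ 0}` is a solution of the kinetic-type evolution equation
`∂_t μ_t + μ_t = Q(μ_t)` with initial condition `μ0`, in the integrated form
`φ_t(ξ) = e^{−t} φ_0(ξ) + ∫_0^t e^{−s} Q̂(φ_{t−s})(ξ) ds`. -/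
def IsKineticSolution (A : ℕ → Ω → ℝ) (P : Measure Ω) (μ0 : Measure ℝ)
    (μ : ℝ → Measure ℝ) : Prop :=
  μ 0 = μ0 ∧ (∀ t : ℝ, 0 ≤ t → IsProbabilityMeasure (μ t)) ∧
    ∀ t : ℝ, 0 ≤ t → ∀ ξ : ℝ,
      charFn (μ t) ξ =
        (Real.exp (-t) : ℂ) * charFn μ0 ξ +
          ∫ s in Set.Ioc (0:ℝ) t, (Real.exp (-s) : ℂ) * Qhat A P (charFn (μ (t - s))) ξ

/-- `E[∑_{j ≥ 1} A_j^θ]` as an `ℝ≥0∞`-valued integral (the summands with `A_j = 0`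
do not contribute). -/
def phiLin (A : ℕ → Ω → ℝ) (P : Measure Ω) (θ : ℝ) : ℝ≥0∞ :=
  ∫⁻ ω, ∑' j, ENNReal.ofReal (if A j ω = 0 then 0 else A j ω ^ θ) ∂P

/-- The spectral function `Φ(θ) = E[∑_{j ≥ 1} A_j^θ] − 1`. -/
def Phi (A : ℕ → Ω → ℝ) (P : Measure Ω) (θ : ℝ) : ℝ := (phiLin A P θ).toReal - 1

/-- `μ ∈ M¹_γ(ℝ)`: probability measure with finite absolute moment of order `γ`,
centered if `γ > 1`. -/
def MemM1 (γ : ℝ) (μ : Measure ℝ) : Prop :=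
  IsProbabilityMeasure μ ∧ (∫⁻ x, ENNReal.ofReal (|x| ^ γ) ∂μ) < ⊤ ∧
    (1 < γ → ∫ x, x ∂μ = 0)

/-! ### The continuous-time branching random walk

Nodes of the Ulam–Harris tree are encoded as lists of naturals in *reversed* order:
`j :: v` is the `j`-th child of the node `v` (children indexed by `ℕ`), and `[]` is the root.
For a node `u`, `W u ω = e^{-S(u)(ω)}` is the multiplicative weight along the ancestral line
(`W u ω = 0` encodes `S(u) = ∞`), and `birth u ω = σ(u)(ω)` is the birth time. -/

/-- A node of the Ulam–Harris tree (coordinates in reversed order). -/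
abbrev Node : Type := List ℕ

/-- `W u ω = e^{-S(u)(ω)}`, the product of the weights `A` along the ancestral line of `u`;
`W u ω = 0` if and only if `S(u)(ω) = ∞`. -/
def W (A : Node → ℕ → Ω → ℝ) : Node → Ω → ℝ
  | [] => fun _ => 1
  | j :: v => fun ω => W A v ω * A v j ω

/-- The birth time `σ(u)`, the sum of the lifetimes of the strict ancestors of `u`. -/
def birth (Ep : Node → Ω → ℝ) : Node → Ω → ℝ
  | [] => fun _ => 0
  | _ :: v => fun ω => birth Ep v ω + Ep v ω

/-- `u ∈ I_t(ω)`: the individual `u` is alive at time `t`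
(`S(u) < ∞`, `σ(u) ≤ t < σ(u) + E(u)`). -/
def memI (A : Node → ℕ → Ω → ℝ) (Ep : Node → Ω → ℝ) (t : ℝ) (u : Node) (ω : Ω) : Prop :=
  W A u ω ≠ 0 ∧ birth Ep u ω ≤ t ∧ t < birth Ep u ω + Ep u ω

open Classical in
/-- `U_t = ∑_{u ∈ I_t} e^{-S(u)} X_u`. -/
def Usum (A : Node → ℕ → Ω → ℝ) (Ep : Node → Ω → ℝ) (X : Node → Ω → ℝ)
    (t : ℝ) (ω : Ω) : ℝ :=
  ∑' u : Node, if memI A Ep t u ω then W A u ω * X u ω else 0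

/-- Measurability and nonnegativity of the data attached to the nodes. -/
def MeasSetup (A : Node → ℕ → Ω → ℝ) (Ep : Node → Ω → ℝ) : Prop :=
  (∀ u j, Measurable (A u j)) ∧ (∀ u, Measurable (Ep u)) ∧ (∀ u j ω, 0 ≤ A u j ω)

/-- The family `((A(u), E(u)))_{u ∈ I}` consists of i.i.d. copies of `(A, E)`
(the pair attached to the root), `E = E(∅)` is a unit-mean exponential random
variable, and `A` and `E` are independent. -/
def IIDCopies (P : Measure Ω) (A : Node → ℕ → Ω → ℝ) (Ep : Node → Ω → ℝ) : Prop :=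
  iIndepFun
      (fun u ω => ((fun j => A u j ω, Ep u ω) : (ℕ → ℝ) × ℝ)) P ∧
    (∀ u : Node,
      IdentDistrib (fun ω => ((fun j => A u j ω, Ep u ω) : (ℕ → ℝ) × ℝ))
        (fun ω => ((fun j => A [] j ω, Ep [] ω) : (ℕ → ℝ) × ℝ)) P P) ∧
    IndepFun (fun ω (j : ℕ) => A [] j ω) (Ep []) P ∧
    (∀ t : ℝ, 0 ≤ t → P {ω | t < Ep [] ω} = ENNReal.ofReal (Real.exp (-t)))

/-- The family `(X_u)_{u ∈ I}` consists of i.i.d. random variables with law `μ0`,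
independent of the family `((A(u), E(u)))_{u ∈ I}`. -/
def XFamily (P : Measure Ω) (A : Node → ℕ → Ω → ℝ) (Ep : Node → Ω → ℝ)
    (X : Node → Ω → ℝ) (μ0 : Measure ℝ) : Prop :=
  (∀ u, Measurable (X u)) ∧ iIndepFun X P ∧
    (∀ u, P.map (X u) = μ0) ∧
    IndepFun (fun ω (u : Node) => ((fun j => A u j ω, Ep u ω) : (ℕ → ℝ) × ℝ))
      (fun ω (u : Node) => X u ω) P

/-! ### Auxiliary machinery -/

namespace ILaux
open Set Real

variable {β γ δ : Type*} [MeasurableSpace β] [MeasurableSpace γ] [MeasurableSpace δ]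

lemma map_prod_eq {P : Measure Ω} [IsProbabilityMeasure P] {X : Ω → β} {Y : Ω → γ}
    (hX : Measurable X) (hY : Measurable Y) (h : IndepFun X Y P) :
    P.map (fun ω => (X ω, Y ω)) = (P.map X).prod (P.map Y) :=
  (indepFun_iff_map_prod_eq_prod_map_map hX.aemeasurable hY.aemeasurable).mp h

lemma lintegral_indep {P : Measure Ω} [IsProbabilityMeasure P] {X : Ω → β} {Y : Ω → γ}
    (hX : Measurable X) (hY : Measurable Y) (h : IndepFun X Y P) {g : β × γ → ℝ≥0∞}
    (hg : Measurable g) :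
    ∫⁻ ω, g (X ω, Y ω) ∂P = ∫⁻ x, ∫⁻ y, g (x, y) ∂(P.map Y) ∂(P.map X) := by
  haveI : IsProbabilityMeasure (P.map Y) := Measure.isProbabilityMeasure_map hY.aemeasurable
  have h1 : ∫⁻ ω, g (X ω, Y ω) ∂P = ∫⁻ p, g p ∂(P.map (fun ω => (X ω, Y ω))) :=
    (lintegral_map hg (hX.prodMk hY)).symm
  rw [h1, map_prod_eq hX hY h, lintegral_prod _ hg.aemeasurable]

lemma lintegral_indep_mul {P : Measure Ω} [IsProbabilityMeasure P] {X : Ω → β} {Y : Ω → γ}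
    (hX : Measurable X) (hY : Measurable Y) (h : IndepFun X Y P) {φ : β → ℝ≥0∞} {ψ : γ → ℝ≥0∞}
    (hφ : Measurable φ) (hψ : Measurable ψ) :
    ∫⁻ ω, φ (X ω) * ψ (Y ω) ∂P = (∫⁻ ω, φ (X ω) ∂P) * ∫⁻ ω, ψ (Y ω) ∂P := by
  have hg : Measurable (fun p : β × γ => φ p.1 * ψ p.2) :=
    (hφ.comp measurable_fst).mul (hψ.comp measurable_snd)
  calc ∫⁻ ω, φ (X ω) * ψ (Y ω) ∂P
      = ∫⁻ x, ∫⁻ y, φ x * ψ y ∂(P.map Y) ∂(P.map X) := lintegral_indep hX hY h hg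
    _ = ∫⁻ x, φ x * ∫⁻ y, ψ y ∂(P.map Y) ∂(P.map X) := by
        refine lintegral_congr fun x => lintegral_const_mul _ hψ
    _ = (∫⁻ x, φ x ∂(P.map X)) * ∫⁻ y, ψ y ∂(P.map Y) := lintegral_mul_const _ hφ
    _ = (∫⁻ ω, φ (X ω) ∂P) * ∫⁻ ω, ψ (Y ω) ∂P := by
        rw [lintegral_map hφ hX, lintegral_map hψ hY]

lemma indepFun_right_pair {P : Measure Ω} [IsProbabilityMeasure P] {X : Ω → β} {Y : Ω → γ}
    {Z : Ω → δ} (hX : Measurable X) (hY : Measurable Y) (hZ : Measurable Z)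
    (hXY : IndepFun X Y P) (hXYZ : IndepFun (fun ω => (X ω, Y ω)) Z P) :
    IndepFun X (fun ω => (Y ω, Z ω)) P := by
  haveI : IsProbabilityMeasure (P.map X) := Measure.isProbabilityMeasure_map hX.aemeasurable
  haveI : IsProbabilityMeasure (P.map Y) := Measure.isProbabilityMeasure_map hY.aemeasurable
  haveI : IsProbabilityMeasure (P.map Z) := Measure.isProbabilityMeasure_map hZ.aemeasurable
  have hYZ : IndepFun Y Z P := hXYZ.comp measurable_snd measurable_id
  rw [indepFun_iff_map_prod_eq_prod_map_map hX.aemeasurable (hY.prodMk hZ).aemeasurable]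
  have key : (fun ω => (X ω, (Y ω, Z ω)))
      = (MeasurableEquiv.prodAssoc : (β × γ) × δ ≃ᵐ β × γ × δ) ∘ (fun ω => ((X ω, Y ω), Z ω)) :=
    rfl
  rw [key, ← Measure.map_map MeasurableEquiv.prodAssoc.measurable ((hX.prodMk hY).prodMk hZ),
    map_prod_eq (hX.prodMk hY) hZ hXYZ, map_prod_eq hX hY hXY, Measure.prodAssoc_prod,
    map_prod_eq hY hZ hYZ]


end ILaux
namespace ILaux
open Set Real

/-- The exponential distribution with rate 1. -/
def expν : Measure ℝ := (volume.restrict (Ioi 0)).withDensity fun x => ENNReal.ofReal (exp (-x))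

lemma expν_apply {s : Set ℝ} (hs : MeasurableSet s) :
    expν s = ∫⁻ x in s ∩ Ioi 0, ENNReal.ofReal (exp (-x)) := by
  rw [expν, withDensity_apply _ hs, Measure.restrict_restrict hs]

lemma integrableOn_exp_neg {s : Set ℝ} (hs : s ⊆ Ioi (0:ℝ)) :
    IntegrableOn (fun x => exp (-x)) s volume := by
  have h : IntegrableOn (fun x => Real.exp (-x)) (Ioi (0:ℝ)) volume := by
    simpa only [neg_mul, one_mul] using exp_neg_integrableOn_Ioi 0 (one_pos)
  exact h.mono_set hs

lemma expν_Ioi {c : ℝ} (hc : 0 ≤ c) : expν (Ioi c) = ENNReal.ofReal (exp (-c)) := by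
  rw [expν_apply measurableSet_Ioi, inter_eq_left.mpr (Ioi_subset_Ioi hc),
    ← ofReal_integral_eq_lintegral_ofReal (integrableOn_exp_neg (Ioi_subset_Ioi hc))
      (ae_of_all _ fun x => (exp_pos _).le), integral_exp_neg_Ioi]

instance : IsProbabilityMeasure expν := by
  constructor
  have h0 : (univ : Set ℝ) ∩ Ioi 0 = Ioi 0 := inter_eq_right.mpr (subset_univ _)
  rw [expν_apply MeasurableSet.univ, h0,
    ← ofReal_integral_eq_lintegral_ofReal (integrableOn_exp_neg subset_rfl)
      (ae_of_all _ fun x => (exp_pos _).le), integral_exp_neg_Ioi_zero, ENNReal.ofReal_one]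

lemma expν_Iic (a : ℝ) :
    expν (Iic a) = if 0 ≤ a then ENNReal.ofReal (1 - exp (-a)) else 0 := by
  rw [expν_apply measurableSet_Iic, Iic_inter_Ioi]
  split_ifs with ha
  · rw [← ofReal_integral_eq_lintegral_ofReal
        (integrableOn_exp_neg Ioc_subset_Ioi_self)
        (ae_of_all _ fun x => (exp_pos _).le),
      ← intervalIntegral.integral_of_le ha, intervalIntegral.integral_comp_neg fun x => exp x,
      integral_exp]
    norm_num
  · rw [Ioc_eq_empty (by simpa using fun h : (0:ℝ) < a => ha h.le)]
    simp

/-- Convolution with the exponential distribution. -/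
def convT (f : ℝ → ℝ≥0∞) : ℝ → ℝ≥0∞ := fun b => ∫⁻ s, f (b + s) ∂expν

lemma meas_convT {f : ℝ → ℝ≥0∞} (hf : Measurable f) : Measurable (convT f) :=
  Measurable.lintegral_prod_right' (f := fun p : ℝ × ℝ => f (p.1 + p.2)) (hf.comp measurable_add)

/-- `gke t k b = 1{b ≤ t} e^{-(t-b)} (t-b)^k / k!`. -/
def gke (t : ℝ) (k : ℕ) (b : ℝ) : ℝ≥0∞ :=
  if b ≤ t then ENNReal.ofReal (exp (-(t - b)) * (t - b) ^ k / k.factorial) else 0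

lemma meas_gke (t : ℝ) (k : ℕ) : Measurable (gke t k) := by
  unfold gke
  refine Measurable.ite measurableSet_Iic ?_ measurable_const
  fun_prop

lemma convT_gke (t : ℝ) (k : ℕ) : convT (gke t k) = gke t (k + 1) := by
  funext b
  have hd : Measurable fun x : ℝ => ENNReal.ofReal (exp (-x)) := by fun_prop
  have hg : Measurable fun s : ℝ => gke t k (b + s) :=
    (meas_gke t k).comp (measurable_const.add measurable_id)
  rw [convT, expν, lintegral_withDensity_eq_lintegral_mul _ hd hg]
  simp only [Pi.mul_apply]
  set c := t - b with hc
  have h2 : ∀ s : ℝ, ENNReal.ofReal (exp (-s)) * gke t k (b + s)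
      = (Iic c).indicator (fun s => ENNReal.ofReal (exp (-c) * (c - s) ^ k / k.factorial)) s := by
    intro s
    by_cases hs : s ≤ c
    · have hbs : b + s ≤ t := by simp only [hc] at hs; linarith
      rw [gke, if_pos hbs, indicator_of_mem (mem_Iic.mpr hs)]
      rw [← ENNReal.ofReal_mul (exp_pos _).le]
      congr 1
      have h3 : t - (b + s) = c - s := by rw [hc]; ring
      have h4 : rexp (-s) * rexp (-(c - s)) = rexp (-c) := by
        rw [← exp_add]; congr 1; ring
      rw [h3, ← h4]; ring
    · have hbs : ¬ b + s ≤ t := by simp only [hc] at hs; intro h; exact hs (by linarith)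
      rw [gke, if_neg hbs, indicator_of_notMem (fun hmem => hs (mem_Iic.mp hmem))]
      simp
  simp_rw [h2]
  rw [lintegral_indicator measurableSet_Iic, Measure.restrict_restrict measurableSet_Iic,
    Iic_inter_Ioi]
  by_cases hb : b ≤ t
  · have hc0 : 0 ≤ c := by simp only [hc]; linarith
    have hcont : Continuous fun s : ℝ => exp (-c) * (c - s) ^ k / k.factorial := by fun_prop
    have hnn : 0 ≤ᵐ[volume.restrict (Ioc 0 c)]
        fun s : ℝ => exp (-c) * (c - s) ^ k / k.factorial := by
      refine (ae_restrict_iff' measurableSet_Ioc).mpr (ae_of_all _ fun s hs => ?_)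
      have : (0:ℝ) ≤ c - s := by linarith [hs.2]
      positivity
    rw [← ofReal_integral_eq_lintegral_ofReal (hcont.intervalIntegrable 0 c).1 hnn,
      gke, if_pos hb]
    congr 1
    rw [← intervalIntegral.integral_of_le hc0]
    have hpt : ∀ s : ℝ, exp (-c) * (c - s) ^ k / k.factorial
        = (exp (-c) / k.factorial) * (c - s) ^ k := fun s => by ring
    simp_rw [hpt]
    rw [intervalIntegral.integral_const_mul,
      intervalIntegral.integral_comp_sub_left (fun x => x ^ k) c, sub_self, sub_zero,
      integral_pow]
    have hk : (k.factorial : ℝ) ≠ 0 := Nat.cast_ne_zero.mpr k.factorial_ne_zero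
    have hk1 : ((k:ℝ) + 1) ≠ 0 := by positivity
    rw [Nat.factorial_succ]
    push_cast
    field_simp
    ring
  · have hlt : ¬ (0:ℝ) < c := by rw [not_lt]; simp only [hc]; linarith [not_le.mp hb]
    rw [Ioc_eq_empty hlt, Measure.restrict_empty, lintegral_zero_measure, gke, if_neg hb]


lemma convT_iter_gke (t : ℝ) : ∀ n : ℕ, convT^[n] (gke t 0) = gke t n
  | 0 => rfl
  | n + 1 => by
    rw [Function.iterate_succ_apply', convT_iter_gke t n, convT_gke]

/-! ### Structure of the branching random walk -/

section BRW

variable (A : Node → ℕ → Ω → ℝ) (Ep : Node → Ω → ℝ)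

/-- The pair of data attached to a node. -/
def Zf : Node → Ω → (ℕ → ℝ) × ℝ := fun u ω => ((fun j => A u j ω), Ep u ω)

/-- The strict ancestors of a node. -/
def ancF : Node → Finset Node
  | [] => ∅
  | _ :: v => insert v (ancF v)

lemma length_lt_of_mem_ancF {x : Node} : ∀ {u : Node}, x ∈ ancF u → x.length < u.length := by
  intro u
  induction u with
  | nil => simp [ancF]
  | cons j v ih =>
    intro hx
    rw [ancF, Finset.mem_insert] at hx
    rcases hx with h | h
    · subst h; exact Nat.lt_succ_self _
    · exact (ih h).trans (Nat.lt_succ_self _)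

lemma meas_Zf (hA : ∀ u j, Measurable (A u j)) (hE : ∀ u, Measurable (Ep u)) (u : Node) :
    Measurable (Zf A Ep u) :=
  (measurable_pi_lambda _ fun j => hA u j).prodMk (hE u)

lemma meas_W (hA : ∀ u j, Measurable (A u j)) : ∀ u : Node, Measurable (W A u) := by
  intro u
  induction u with
  | nil => exact measurable_const
  | cons j v ih => exact ih.mul (hA v j)

lemma meas_birth (hE : ∀ u, Measurable (Ep u)) : ∀ u : Node, Measurable (birth Ep u) := by
  intro u
  induction u with
  | nil => exact measurable_const
  | cons j v ih => exact ih.add (hE v)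

lemma W_nonneg (hA0 : ∀ u j ω, 0 ≤ A u j ω) : ∀ (u : Node) (ω : Ω), 0 ≤ W A u ω := by
  intro u
  induction u with
  | nil => intro ω; exact zero_le_one
  | cons j v ih => intro ω; exact mul_nonneg (ih ω) (hA0 v j ω)

lemma rep_WB (hA : ∀ u j, Measurable (A u j)) (hE : ∀ u, Measurable (Ep u)) :
    ∀ u : Node, ∃ g : (({x // x ∈ ancF u}) → (ℕ → ℝ) × ℝ) → ℝ × ℝ, Measurable g ∧
      ∀ ω : Ω, g (fun i => Zf A Ep i.1 ω) = (W A u ω, birth Ep u ω) := by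
  intro u
  induction u with
  | nil => exact ⟨fun _ => (1, 0), measurable_const, fun ω => rfl⟩
  | cons j v ih =>
    obtain ⟨g, hg, hgeq⟩ := ih
    have hmem : v ∈ ancF (j :: v) := by rw [ancF]; exact Finset.mem_insert_self _ _
    have hsub : ∀ x : Node, x ∈ ancF v → x ∈ ancF (j :: v) := by
      intro x hx; rw [ancF]; exact Finset.mem_insert_of_mem hx
    refine ⟨fun h =>
      ((g fun i => h ⟨i.1, hsub i.1 i.2⟩).1 * (h ⟨v, hmem⟩).1 j,
       (g fun i => h ⟨i.1, hsub i.1 i.2⟩).2 + (h ⟨v, hmem⟩).2), ?_, ?_⟩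
    · have hr : Measurable fun (h : ({x // x ∈ ancF (j :: v)}) → (ℕ → ℝ) × ℝ) =>
          g fun i => h ⟨i.1, hsub i.1 i.2⟩ :=
        hg.comp (measurable_pi_lambda _ fun i => measurable_pi_apply _)
      have he : Measurable fun (h : ({x // x ∈ ancF (j :: v)}) → (ℕ → ℝ) × ℝ) =>
          h ⟨v, hmem⟩ := measurable_pi_apply _
      exact (hr.fst.mul ((measurable_pi_apply j).comp he.fst)).prodMk (hr.snd.add he.snd)
    · intro ω
      have h1 := hgeq ω
      simp only [h1]
      rfl

/-- Key independence: the data attached to `u` is independent of `(W u, birth u)`. -/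
lemma indep_Zf_WB (P : Measure Ω) [IsProbabilityMeasure P]
    (hA : ∀ u j, Measurable (A u j)) (hE : ∀ u, Measurable (Ep u))
    (hindep : iIndepFun (Zf A Ep) P) (u : Node) :
    IndepFun (Zf A Ep u) (fun ω => (W A u ω, birth Ep u ω)) P := by
  obtain ⟨g, hg, hgeq⟩ := rep_WB A Ep hA hE u
  have hdisj : Disjoint {u} (ancF u) := by
    rw [Finset.disjoint_singleton_left]
    intro h
    exact absurd (length_lt_of_mem_ancF h) (lt_irrefl _)
  have h := hindep.indepFun_finset {u} (ancF u) hdisj (meas_Zf A Ep hA hE)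
  have h2 := h.comp (measurable_pi_apply (⟨u, Finset.mem_singleton_self u⟩ :
    {x // x ∈ ({u} : Finset Node)})) hg
  have h3 : (g ∘ fun (a : Ω) (i : {x // x ∈ ancF u}) => Zf A Ep i.1 a)
      = fun ω => (W A u ω, birth Ep u ω) := funext hgeq
  rw [← h3]
  exact h2

variable (P : Measure Ω) [IsProbabilityMeasure P]

lemma map_Ep_eq (hiid : IIDCopies P A Ep) (u : Node) : P.map (Ep u) = P.map (Ep []) :=
  ((hiid.2.1 u).comp measurable_snd).map_eq

lemma map_A_eq (hiid : IIDCopies P A Ep) (u : Node) :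
    P.map (fun ω (j : ℕ) => A u j ω) = P.map (fun ω (j : ℕ) => A [] j ω) :=
  ((hiid.2.1 u).comp measurable_fst).map_eq

lemma indep_A_Ep (hmeas : MeasSetup A Ep) (hiid : IIDCopies P A Ep) (u : Node) :
    IndepFun (fun ω (j : ℕ) => A u j ω) (Ep u) P := by
  have hAm : Measurable fun ω (j : ℕ) => A u j ω :=
    measurable_pi_lambda _ fun j => hmeas.1 u j
  have hAm0 : Measurable fun ω (j : ℕ) => A [] j ω :=
    measurable_pi_lambda _ fun j => hmeas.1 [] j
  rw [indepFun_iff_map_prod_eq_prod_map_map hAm.aemeasurable (hmeas.2.1 u).aemeasurable]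
  have h1 : P.map (fun ω => ((fun j => A u j ω), Ep u ω))
      = P.map (fun ω => ((fun j => A [] j ω), Ep [] ω)) := (hiid.2.1 u).map_eq
  rw [h1, map_A_eq A Ep P hiid u, map_Ep_eq A Ep P hiid u]
  exact (indepFun_iff_map_prod_eq_prod_map_map hAm0.aemeasurable
    (hmeas.2.1 []).aemeasurable).mp hiid.2.2.1

lemma map_Ep_expν (hmeas : MeasSetup A Ep) (hiid : IIDCopies P A Ep) :
    P.map (Ep []) = expν := by
  have hE := hmeas.2.1
  haveI : IsProbabilityMeasure (P.map (Ep [])) :=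
    Measure.isProbabilityMeasure_map (hE []).aemeasurable
  refine Measure.ext_of_Iic _ _ fun a => ?_
  rw [Measure.map_apply (hE []) measurableSet_Iic, expν_Iic]
  have hset : Ep [] ⁻¹' Iic a = {ω | a < Ep [] ω}ᶜ := by ext ω; simp [not_lt]
  have hms : ∀ b : ℝ, MeasurableSet {ω | b < Ep [] ω} :=
    fun b => measurableSet_lt measurable_const (hE [])
  split_ifs with ha
  · rw [hset, prob_compl_eq_one_sub (hms a), hiid.2.2.2 a ha,
      ENNReal.ofReal_sub _ (exp_nonneg _), ENNReal.ofReal_one]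
  · have h0 : P ({ω | (0:ℝ) < Ep [] ω}ᶜ) = 0 := by
      rw [prob_compl_eq_one_sub (hms 0), hiid.2.2.2 0 le_rfl]
      simp
    refine measure_mono_null ?_ h0
    intro ω hω
    simp only [mem_compl_iff, mem_setOf_eq, not_lt] at hω ⊢
    exact le_trans hω (by linarith [not_le.mp ha])

/-- `E[1{A_j ≠ 0} A_j^θ]`. -/
def mjf (θ : ℝ) (j : ℕ) : ℝ≥0∞ :=
  ∫⁻ ω, (if A [] j ω = 0 then 0 else ENNReal.ofReal (A [] j ω ^ θ)) ∂P

/-- `∏_{k} E[1{A_{u_k} ≠ 0} A_{u_k}^θ]` along the path of `u`. -/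
def Mw (θ : ℝ) (u : Node) : ℝ≥0∞ := (u.map (mjf A P θ)).prod

lemma main_integral (hmeas : MeasSetup A Ep) (hiid : IIDCopies P A Ep) (θ : ℝ) :
    ∀ (u : Node) (f : ℝ → ℝ≥0∞), Measurable f →
      ∫⁻ ω, (if W A u ω = 0 then 0 else ENNReal.ofReal (W A u ω ^ θ)) * f (birth Ep u ω) ∂P
        = Mw A P θ u * (convT^[u.length] f) 0 := by
  obtain ⟨hA, hE, hA0⟩ := hmeas
  intro u
  induction u with
  | nil =>
    intro f hf
    have h0 : ∀ ω : Ω, (if W A ([] : Node) ω = 0 then 0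
        else ENNReal.ofReal (W A ([] : Node) ω ^ θ)) * f (birth Ep ([] : Node) ω) = f 0 := by
      intro ω
      show (if (1:ℝ) = 0 then 0 else ENNReal.ofReal ((1:ℝ) ^ θ)) * f 0 = f 0
      rw [if_neg one_ne_zero, Real.one_rpow, ENNReal.ofReal_one, one_mul]
    rw [lintegral_congr h0, lintegral_const, measure_univ, mul_one]
    simp [Mw]
  | cons j v ih =>
    intro f hf
    have hWv := meas_W A hA v
    have hBv := meas_birth Ep hE v
    have hWB : Measurable fun ω => (W A v ω, birth Ep v ω) := hWv.prodMk hBv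
    have hAv : Measurable fun ω (j' : ℕ) => A v j' ω :=
      measurable_pi_lambda _ fun j' => hA v j'
    have hφ : Measurable fun a : ℕ → ℝ => if a j = 0 then 0 else ENNReal.ofReal (a j ^ θ) := by
      refine Measurable.ite ?_ measurable_const (by fun_prop)
      exact measurableSet_eq_fun (measurable_pi_apply j) measurable_const
    have hψ : Measurable fun p : ℝ × (ℝ × ℝ) =>
        (if p.2.1 = 0 then 0 else ENNReal.ofReal (p.2.1 ^ θ)) * f (p.2.2 + p.1) := by
      refine Measurable.mul ?_ (hf.comp ((measurable_snd.snd).add measurable_fst))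
      exact Measurable.ite (measurableSet_eq_fun (measurable_snd.fst) measurable_const)
        measurable_const (by fun_prop)
    have hG1 : IndepFun (Zf A Ep v) (fun ω => (W A v ω, birth Ep v ω)) P :=
      indep_Zf_WB A Ep P hA hE hiid.1 v
    have hXY : IndepFun (fun ω (j' : ℕ) => A v j' ω) (Ep v) P :=
      indep_A_Ep A Ep P ⟨hA, hE, hA0⟩ hiid v
    have hX3 : IndepFun (fun ω (j' : ℕ) => A v j' ω)
        (fun ω => (Ep v ω, (W A v ω, birth Ep v ω))) P :=
      indepFun_right_pair hAv (hE v) hWB hXY hG1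
    have hEWB : IndepFun (fun ω => (W A v ω, birth Ep v ω)) (Ep v) P :=
      hG1.symm.comp measurable_id measurable_snd
    have hpt : ∀ ω : Ω, (if W A (j :: v) ω = 0 then 0
        else ENNReal.ofReal (W A (j :: v) ω ^ θ)) * f (birth Ep (j :: v) ω)
        = (if A v j ω = 0 then 0 else ENNReal.ofReal (A v j ω ^ θ)) *
            ((if W A v ω = 0 then 0 else ENNReal.ofReal (W A v ω ^ θ)) *
              f (birth Ep v ω + Ep v ω)) := by
      intro ω
      show (if W A v ω * A v j ω = 0 then 0
          else ENNReal.ofReal ((W A v ω * A v j ω) ^ θ)) * f (birth Ep v ω + Ep v ω) = _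
      by_cases hw : W A v ω = 0
      · simp [hw]
      by_cases ha : A v j ω = 0
      · simp [ha, hw]
      · rw [if_neg (mul_ne_zero hw ha), if_neg ha, if_neg hw,
          Real.mul_rpow (W_nonneg A hA0 v ω) (hA0 v j ω),
          ENNReal.ofReal_mul (Real.rpow_nonneg (W_nonneg A hA0 v ω) θ)]
        ring
    have hg2 : Measurable fun p : (ℝ × ℝ) × ℝ =>
        (if p.1.1 = 0 then 0 else ENNReal.ofReal (p.1.1 ^ θ)) * f (p.1.2 + p.2) := by
      refine Measurable.mul ?_ (hf.comp ((measurable_fst.snd).add measurable_snd))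
      exact Measurable.ite (measurableSet_eq_fun (measurable_fst.fst) measurable_const)
        measurable_const (by fun_prop)
    calc ∫⁻ ω, (if W A (j :: v) ω = 0 then 0
          else ENNReal.ofReal (W A (j :: v) ω ^ θ)) * f (birth Ep (j :: v) ω) ∂P
        = ∫⁻ ω, (if A v j ω = 0 then 0 else ENNReal.ofReal (A v j ω ^ θ)) *
            ((if W A v ω = 0 then 0 else ENNReal.ofReal (W A v ω ^ θ)) *
              f (birth Ep v ω + Ep v ω)) ∂P := lintegral_congr hpt
      _ = (∫⁻ ω, (if A v j ω = 0 then 0 else ENNReal.ofReal (A v j ω ^ θ)) ∂P) *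
            ∫⁻ ω, (if W A v ω = 0 then 0 else ENNReal.ofReal (W A v ω ^ θ)) *
              f (birth Ep v ω + Ep v ω) ∂P :=
          lintegral_indep_mul hAv ((hE v).prodMk hWB) hX3 hφ hψ
      _ = mjf A P θ j * ∫⁻ ω, (if W A v ω = 0 then 0 else ENNReal.ofReal (W A v ω ^ θ)) *
              f (birth Ep v ω + Ep v ω) ∂P := by
          congr 1
          calc ∫⁻ ω, (if A v j ω = 0 then 0 else ENNReal.ofReal (A v j ω ^ θ)) ∂P
              = ∫⁻ a, (if a j = 0 then 0 else ENNReal.ofReal (a j ^ θ))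
                  ∂(P.map (fun ω (j' : ℕ) => A v j' ω)) := (lintegral_map hφ hAv).symm
            _ = ∫⁻ a, (if a j = 0 then 0 else ENNReal.ofReal (a j ^ θ))
                  ∂(P.map (fun ω (j' : ℕ) => A [] j' ω)) := by rw [map_A_eq A Ep P hiid v]
            _ = mjf A P θ j := lintegral_map hφ
                (measurable_pi_lambda _ fun j' => hA [] j')
      _ = mjf A P θ j * ∫⁻ w, ∫⁻ s, (if w.1 = 0 then 0 else ENNReal.ofReal (w.1 ^ θ)) *
              f (w.2 + s) ∂(P.map (Ep v)) ∂(P.map fun ω => (W A v ω, birth Ep v ω)) := by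
          rw [lintegral_indep hWB (hE v) hEWB hg2]
      _ = mjf A P θ j * ∫⁻ w, (if w.1 = 0 then 0 else ENNReal.ofReal (w.1 ^ θ)) *
            convT f w.2 ∂(P.map fun ω => (W A v ω, birth Ep v ω)) := by
          congr 1
          refine lintegral_congr fun w => ?_
          rw [lintegral_const_mul _ (show Measurable fun s : ℝ => f (w.2 + s) from hf.comp (measurable_const.add measurable_id)),
            map_Ep_eq A Ep P hiid v, map_Ep_expν A Ep P ⟨hA, hE, hA0⟩ hiid]
          rfl
      _ = mjf A P θ j * ∫⁻ ω, (if W A v ω = 0 then 0 else ENNReal.ofReal (W A v ω ^ θ)) *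
            convT f (birth Ep v ω) ∂P := by
          congr 1
          exact lintegral_map (Measurable.mul
            (Measurable.ite (measurableSet_eq_fun measurable_fst measurable_const)
              measurable_const (by fun_prop))
            ((meas_convT hf).comp measurable_snd)) hWB
      _ = mjf A P θ j * (Mw A P θ v * (convT^[v.length] (convT f)) 0) := by
          rw [ih (convT f) (meas_convT hf)]
      _ = Mw A P θ (j :: v) * (convT^[(j :: v).length] f) 0 := by
          simp only [Mw, List.map_cons, List.prod_cons, List.length_cons,
            Function.iterate_succ_apply]
          ring

open Classical in
lemma node_integral (hmeas : MeasSetup A Ep) (hiid : IIDCopies P A Ep) (θ : ℝ)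
    {t : ℝ} (ht : 0 ≤ t) (u : Node) :
    ∫⁻ ω, (if memI A Ep t u ω then ENNReal.ofReal (W A u ω ^ θ) else 0) ∂P
      = Mw A P θ u * ENNReal.ofReal (Real.exp (-t) * t ^ u.length / u.length.factorial) := by
  obtain ⟨hA, hE, hA0⟩ := hmeas
  have hWu := meas_W A hA u
  have hBu := meas_birth Ep hE u
  have hWB : Measurable fun ω => (W A u ω, birth Ep u ω) := hWu.prodMk hBu
  have hG1 : IndepFun (Zf A Ep u) (fun ω => (W A u ω, birth Ep u ω)) P :=
    indep_Zf_WB A Ep P hA hE hiid.1 u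
  have hEWB : IndepFun (fun ω => (W A u ω, birth Ep u ω)) (Ep u) P :=
    hG1.symm.comp measurable_id measurable_snd
  have hg : Measurable fun p : (ℝ × ℝ) × ℝ =>
      (if p.1.1 = 0 then 0 else ENNReal.ofReal (p.1.1 ^ θ)) *
        (if p.1.2 ≤ t ∧ t < p.1.2 + p.2 then (1:ℝ≥0∞) else 0) := by
    refine Measurable.mul ?_ ?_
    · exact Measurable.ite (measurableSet_eq_fun (measurable_fst.fst) measurable_const)
        measurable_const (by fun_prop)
    · refine Measurable.ite ?_ measurable_const measurable_const
      exact (measurableSet_le (measurable_fst.snd) measurable_const).inter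
        (measurableSet_lt measurable_const ((measurable_fst.snd).add measurable_snd))
  have hpt : ∀ ω : Ω, (if memI A Ep t u ω then ENNReal.ofReal (W A u ω ^ θ) else 0)
      = (if W A u ω = 0 then 0 else ENNReal.ofReal (W A u ω ^ θ)) *
          (if birth Ep u ω ≤ t ∧ t < birth Ep u ω + Ep u ω then (1:ℝ≥0∞) else 0) := by
    intro ω
    simp only [memI]
    by_cases hw : W A u ω = 0
    · rw [if_pos hw, zero_mul]; exact if_neg (fun hmem => hmem.1 hw)
    by_cases hal : birth Ep u ω ≤ t ∧ t < birth Ep u ω + Ep u ω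
    · rw [if_pos hal, if_neg hw, mul_one]; exact if_pos (⟨hw, hal.1, hal.2⟩ : _ ∧ _)
    · rw [if_neg hal, mul_zero]; exact if_neg (fun hmem => hal ⟨hmem.2.1, hmem.2.2⟩)
  calc ∫⁻ ω, (if memI A Ep t u ω then ENNReal.ofReal (W A u ω ^ θ) else 0) ∂P
      = ∫⁻ ω, (if W A u ω = 0 then 0 else ENNReal.ofReal (W A u ω ^ θ)) *
          (if birth Ep u ω ≤ t ∧ t < birth Ep u ω + Ep u ω then (1:ℝ≥0∞) else 0) ∂P :=
        lintegral_congr hpt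
    _ = ∫⁻ w, ∫⁻ s, (if w.1 = 0 then 0 else ENNReal.ofReal (w.1 ^ θ)) *
          (if w.2 ≤ t ∧ t < w.2 + s then (1:ℝ≥0∞) else 0) ∂(P.map (Ep u))
          ∂(P.map fun ω => (W A u ω, birth Ep u ω)) :=
        lintegral_indep hWB (hE u) hEWB hg
    _ = ∫⁻ w, (if w.1 = 0 then 0 else ENNReal.ofReal (w.1 ^ θ)) * gke t 0 w.2
          ∂(P.map fun ω => (W A u ω, birth Ep u ω)) := by
        refine lintegral_congr fun w => ?_
        have hindm : Measurable fun s : ℝ => (if w.2 ≤ t ∧ t < w.2 + s then (1:ℝ≥0∞) else 0) := by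
          refine Measurable.ite ?_ measurable_const measurable_const
          exact (MeasurableSet.const _).inter
            (measurableSet_lt measurable_const (measurable_const.add measurable_id))
        rw [lintegral_const_mul _ hindm, map_Ep_eq A Ep P hiid u,
          map_Ep_expν A Ep P ⟨hA, hE, hA0⟩ hiid]
        congr 1
        by_cases hb : w.2 ≤ t
        · have hset : ∀ s : ℝ, (if w.2 ≤ t ∧ t < w.2 + s then (1:ℝ≥0∞) else 0)
              = (Ioi (t - w.2)).indicator (fun _ => (1:ℝ≥0∞)) s := by
            intro s
            by_cases hs : t - w.2 < s
            · rw [if_pos ⟨hb, by linarith⟩, indicator_of_mem (mem_Ioi.mpr hs)]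
            · rw [if_neg (fun hcon => hs (by linarith [hcon.2]))]
              exact (indicator_of_notMem (by simpa using hs) _).symm
          simp_rw [hset]
          rw [lintegral_indicator measurableSet_Ioi, setLIntegral_one,
            expν_Ioi (by linarith), gke, if_pos hb]
          simp
        · have hz : ∀ s : ℝ, (if w.2 ≤ t ∧ t < w.2 + s then (1:ℝ≥0∞) else 0) = 0 :=
            fun s => if_neg (fun hcon => hb hcon.1)
          simp_rw [hz]
          rw [lintegral_zero, gke, if_neg hb]
    _ = ∫⁻ ω, (if W A u ω = 0 then 0 else ENNReal.ofReal (W A u ω ^ θ)) *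
          gke t 0 (birth Ep u ω) ∂P :=
        lintegral_map (Measurable.mul
          (Measurable.ite (measurableSet_eq_fun measurable_fst measurable_const)
            measurable_const (by fun_prop))
          ((meas_gke t 0).comp measurable_snd)) hWB
    _ = Mw A P θ u * (convT^[u.length] (gke t 0)) 0 :=
        main_integral A Ep P ⟨hA, hE, hA0⟩ hiid θ u (gke t 0) (meas_gke t 0)
    _ = Mw A P θ u * ENNReal.ofReal (Real.exp (-t) * t ^ u.length / u.length.factorial) := by
        rw [convT_iter_gke, gke, if_pos ht]
        simp

/-- Lists of length `n + 1` are a head together with a list of length `n`. -/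
def consEquiv (n : ℕ) : (ℕ × {l : Node // l.length = n}) ≃ {l : Node // l.length = n + 1} where
  toFun p := ⟨p.1 :: p.2.1, by simp [p.2.2]⟩
  invFun l := (l.1.headI, ⟨l.1.tail, by
    rcases l with ⟨l, hl⟩
    cases l with
    | nil => simp at hl
    | cons a l => simpa using hl⟩)
  left_inv p := by rcases p with ⟨j, ⟨l, hl⟩⟩; rfl
  right_inv l := by
    rcases l with ⟨l, hl⟩
    cases l with
    | nil => simp at hl
    | cons a l => rfl

lemma tsum_Mw (θ : ℝ) : ∀ n : ℕ,
    ∑' l : {l : Node // l.length = n}, Mw A P θ l.1 = (∑' j : ℕ, mjf A P θ j) ^ n := by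
  intro n
  induction n with
  | zero =>
    have huniq : ∀ l : {l : Node // l.length = 0}, l = ⟨[], rfl⟩ :=
      fun l => Subtype.ext (List.length_eq_zero_iff.mp l.2)
    rw [tsum_eq_single (⟨[], rfl⟩ : {l : Node // l.length = 0})
      (fun l hl => absurd (huniq l) hl)]
    simp [Mw]
  | succ n ih =>
    calc ∑' l : {l : Node // l.length = n + 1}, Mw A P θ l.1
        = ∑' p : ℕ × {l : Node // l.length = n}, Mw A P θ ((consEquiv n) p).1 :=
          ((consEquiv n).tsum_eq fun l : {l : Node // l.length = n + 1} => Mw A P θ l.1).symm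
      _ = ∑' p : ℕ × {l : Node // l.length = n}, mjf A P θ p.1 * Mw A P θ p.2.1 := by
          refine tsum_congr fun p => ?_
          rcases p with ⟨j, ⟨l, hl⟩⟩
          simp [consEquiv, Mw]
      _ = ∑' j : ℕ, ∑' l : {l : Node // l.length = n}, mjf A P θ j * Mw A P θ l.1 :=
          ENNReal.tsum_prod' (f := fun p : ℕ × {l : Node // l.length = n} =>
            mjf A P θ p.1 * Mw A P θ p.2.1)
      _ = (∑' j : ℕ, mjf A P θ j) * (∑' j : ℕ, mjf A P θ j) ^ n := by
          simp_rw [ENNReal.tsum_mul_left]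
          rw [ENNReal.tsum_mul_right, ih]
      _ = (∑' j : ℕ, mjf A P θ j) ^ (n + 1) := (pow_succ' _ _).symm

lemma tsum_mjf (hmeas : MeasSetup A Ep) (θ : ℝ) :
    ∑' j : ℕ, mjf A P θ j = phiLin (A []) P θ := by
  rw [phiLin, lintegral_tsum (fun j => ?_)]
  · refine tsum_congr fun j => ?_
    rw [mjf]
    refine lintegral_congr fun ω => ?_
    split_ifs with h <;> simp
  · refine Measurable.aemeasurable ?_
    refine Measurable.ennreal_ofReal ?_
    have hAj : Measurable (A [] j) := hmeas.1 [] j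
    exact Measurable.ite (measurableSet_eq_fun hAj measurable_const)
      measurable_const (by fun_prop)

end BRW
end ILaux


open Classical in
/-- if `Φ(θ) < ∞` then the Laplace transform of the intensity of the
branching random walk satisfies `E[∑_{u ∈ I_t} e^{−θ S(u)}] = e^{t Φ(θ)}` for all `t ≥ 0`. -/
theorem intensity_laplace (P : Measure Ω) [IsProbabilityMeasure P]
    (A : Node → ℕ → Ω → ℝ) (Ep : Node → Ω → ℝ)
    (hmeas : MeasSetup A Ep) (hiid : IIDCopies P A Ep)
    (hN : ∀ᵐ ω ∂P, {j | A [] j ω ≠ 0}.Finite)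
    (θ : ℝ) (hθ : 0 ≤ θ) (hΦ : phiLin (A []) P θ < ⊤) :
    ∀ t : ℝ, 0 ≤ t →
      ∫⁻ ω, ∑' u : Node,
          (if memI A Ep t u ω then ENNReal.ofReal (W A u ω ^ θ) else 0) ∂P =
        ENNReal.ofReal (Real.exp (t * Phi (A []) P θ))  := by
  intro t ht
  obtain ⟨hA, hE, hA0⟩ := hmeas
  have hWm := ILaux.meas_W A hA
  have hBm := ILaux.meas_birth Ep hE
  have hFmeas : ∀ u : Node, Measurable fun ω =>
      (if memI A Ep t u ω then ENNReal.ofReal (W A u ω ^ θ) else 0) := by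
    intro u
    have hWu : Measurable (W A u) := hWm u
    refine Measurable.ite ?_ (by fun_prop) measurable_const
    show MeasurableSet {ω | W A u ω ≠ 0 ∧ birth Ep u ω ≤ t ∧ t < birth Ep u ω + Ep u ω}
    exact ((hWu (measurableSet_singleton 0)).compl).inter
      ((measurableSet_le (hBm u) measurable_const).inter
        (measurableSet_lt measurable_const ((hBm u).add (hE u))))
  rw [lintegral_tsum (fun u => (hFmeas u).aemeasurable)]
  have hnode := fun u => ILaux.node_integral A Ep P ⟨hA, hE, hA0⟩ hiid θ ht u
  have hmj : ∑' j : ℕ, ILaux.mjf A P θ j = phiLin (A []) P θ :=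
    ILaux.tsum_mjf A Ep P ⟨hA, hE, hA0⟩ θ
  have hmne : phiLin (A []) P θ ≠ ⊤ := hΦ.ne
  have hMnn : (0:ℝ) ≤ (phiLin (A []) P θ).toReal := ENNReal.toReal_nonneg
  have hsum : ∀ n : ℕ, ∑' l : {l : Node // l.length = n}, ILaux.Mw A P θ l.1
      = (phiLin (A []) P θ) ^ n := by
    intro n; rw [ILaux.tsum_Mw A P θ n, hmj]
  calc ∑' u : Node, ∫⁻ ω, (if memI A Ep t u ω then ENNReal.ofReal (W A u ω ^ θ) else 0) ∂P
      = ∑' u : Node, ILaux.Mw A P θ u *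
          ENNReal.ofReal (Real.exp (-t) * t ^ u.length / u.length.factorial) :=
        tsum_congr hnode
    _ = ∑' p : (Σ n : ℕ, {l : Node // l.length = n}), ILaux.Mw A P θ p.2.1 *
          ENNReal.ofReal (Real.exp (-t) * t ^ p.2.1.length / p.2.1.length.factorial) :=
        ((Equiv.sigmaFiberEquiv (fun l : Node => l.length)).tsum_eq _).symm
    _ = ∑' n : ℕ, ∑' l : {l : Node // l.length = n}, ILaux.Mw A P θ l.1 *
          ENNReal.ofReal (Real.exp (-t) * t ^ l.1.length / l.1.length.factorial) :=
        ENNReal.tsum_sigma' _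
    _ = ∑' n : ℕ, (phiLin (A []) P θ) ^ n *
          ENNReal.ofReal (Real.exp (-t) * t ^ n / n.factorial) := by
        refine tsum_congr fun n => ?_
        calc ∑' l : {l : Node // l.length = n}, ILaux.Mw A P θ l.1 *
              ENNReal.ofReal (Real.exp (-t) * t ^ l.1.length / l.1.length.factorial)
            = ∑' l : {l : Node // l.length = n}, ILaux.Mw A P θ l.1 *
              ENNReal.ofReal (Real.exp (-t) * t ^ n / n.factorial) := by
              refine tsum_congr fun l => ?_
              rw [l.2]
          _ = (∑' l : {l : Node // l.length = n}, ILaux.Mw A P θ l.1) *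
              ENNReal.ofReal (Real.exp (-t) * t ^ n / n.factorial) := ENNReal.tsum_mul_right
          _ = (phiLin (A []) P θ) ^ n *
              ENNReal.ofReal (Real.exp (-t) * t ^ n / n.factorial) := by rw [hsum n]
    _ = ∑' n : ℕ, ENNReal.ofReal
          (Real.exp (-t) * ((phiLin (A []) P θ).toReal * t) ^ n / n.factorial) := by
        refine tsum_congr fun n => ?_
        rw [← ENNReal.ofReal_toReal hmne, ← ENNReal.ofReal_pow hMnn,
          ← ENNReal.ofReal_mul (pow_nonneg hMnn n)]
        rw [ENNReal.ofReal_toReal hmne]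
        congr 1
        rw [mul_pow]
        ring
    _ = ENNReal.ofReal (Real.exp (t * Phi (A []) P θ)) := by
        have hnn : ∀ n : ℕ, (0:ℝ) ≤
            Real.exp (-t) * ((phiLin (A []) P θ).toReal * t) ^ n / n.factorial :=
          fun n => div_nonneg (mul_nonneg (Real.exp_nonneg _)
            (pow_nonneg (mul_nonneg hMnn ht) n)) (Nat.cast_nonneg _)
        have hsummable : Summable fun n : ℕ =>
            Real.exp (-t) * ((phiLin (A []) P θ).toReal * t) ^ n / n.factorial := by
          refine (Summable.mul_left (Real.exp (-t))
            (Real.summable_pow_div_factorial ((phiLin (A []) P θ).toReal * t))).congr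
            fun n => by ring
        rw [← ENNReal.ofReal_tsum_of_nonneg hnn hsummable]
        congr 1
        have h1 : ∀ n : ℕ, Real.exp (-t) * ((phiLin (A []) P θ).toReal * t) ^ n / n.factorial
            = Real.exp (-t) * (((phiLin (A []) P θ).toReal * t) ^ n / n.factorial) :=
          fun n => by ring
        simp_rw [h1]
        rw [tsum_mul_left]
        have h2 : ∑' n : ℕ, ((phiLin (A []) P θ).toReal * t) ^ n / n.factorial
            = Real.exp ((phiLin (A []) P θ).toReal * t) := by
          rw [Real.exp_eq_exp_ℝ, NormedSpace.exp_eq_tsum_div]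
        rw [h2, ← Real.exp_add]
        congr 1
        simp only [Phi]
        ring
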